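/- arXiv:2304.01332 — 2 statements merged into one kernel-verified Lean document; each statement's English description precedes it below -/
import Mathlib

section
/- Let A and B be C*-algebras with A unital. A completely positive map θ : A → B is order zero if and only if θ(a)θ(b) = θ(1_A)θ(ab) for all a, b ∈ A. -/
open scoped ENNReal Matrix
open Filter

noncomputable section

/-- Complete positivity of a linear map between C⋆-algebra-like star rings, phrased via the
algebraic description of positivity: matrices of the form `Nᴴ * N` are mapped to matrices of
this form at every matrix level. -/
def CompletelyPositive {A B : Type*}
    [NonUnitalRing A] [StarRing A] [Module ℂ A]
    [NonUnitalRing B] [StarRing B] [Module ℂ B] (θ : A →ₗ[ℂ] B) : Prop :=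
  ∀ (r : ℕ) (M : Matrix (Fin r) (Fin r) A),
    (∃ N : Matrix (Fin r) (Fin r) A, M = Nᴴ * N) →
    ∃ N : Matrix (Fin r) (Fin r) B, M.map θ = Nᴴ * N

/-- The canonical C⋆-norm on matrices over a (possibly non-unital) C⋆-algebra, described
algebraically via positivity in matrices over the unitization. -/
def matNormGen {A : Type*} [NonUnitalRing A] [StarRing A] [Module ℂ A]
    [SMulCommClass ℂ A A] [IsScalarTower ℂ A A] [StarModule ℂ A] {r : ℕ}
    (M : Matrix (Fin r) (Fin r) A) : ℝ :=
  sInf {t : ℝ | 0 ≤ t ∧ ∃ N : Matrix (Fin r) (Fin r) (Unitization ℂ A),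
    ((t : ℂ) ^ 2) • (1 : Matrix (Fin r) (Fin r) (Unitization ℂ A)) -
      (M.map (Unitization.inr : A → Unitization ℂ A))ᴴ *
        (M.map (Unitization.inr : A → Unitization ℂ A)) = Nᴴ * N}

section CSLemma
variable {C : Type*} [NonUnitalCStarAlgebra C] [PartialOrder C] [StarOrderedRing C]

lemma my_smul_nonneg {r : ℝ} (hr : 0 ≤ r) {z : C} (hz : 0 ≤ z) : 0 ≤ r • z := by
  have hsa : IsSelfAdjoint (CFC.sqrt z) := IsSelfAdjoint.of_nonneg (CFC.sqrt_nonneg _)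
  have : r • z = star (Real.sqrt r • CFC.sqrt z) * (Real.sqrt r • CFC.sqrt z) := by
    rw [star_smul, star_trivial, smul_mul_smul_comm, Real.mul_self_sqrt hr, hsa.star_eq,
      CFC.sqrt_mul_sqrt_self z hz]
  rw [this]
  exact star_mul_self_nonneg _

lemma my_smul_mono {r : ℝ} (hr : 0 ≤ r) {x y : C} (h : x ≤ y) : r • x ≤ r • y := by
  rw [← sub_nonneg, ← smul_sub]
  exact my_smul_nonneg hr (sub_nonneg.2 h)

lemma myCS {ι : Type*} [Fintype ι] (p q : ι → C) :
    star (∑ k, star (p k) * q k) * (∑ k, star (p k) * q k)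
      ≤ ‖∑ k, star (p k) * p k‖ • ∑ k, star (q k) * q k := by
  set X := ∑ k, star (p k) * q k with hX
  set A0 := ∑ k, star (p k) * p k with hA0
  set B0 := ∑ k, star (q k) * q k with hB0
  have hXstar : star X = ∑ k, star (q k) * p k := by
    rw [hX, star_sum]
    exact Finset.sum_congr rfl fun k _ => by rw [star_mul, star_star]
  have hA0nn : 0 ≤ A0 := Finset.sum_nonneg fun k _ => star_mul_self_nonneg _
  have hB0nn : 0 ≤ B0 := Finset.sum_nonneg fun k _ => star_mul_self_nonneg _
  have key : ∀ c : C, star c * X + star X * c ≤ star c * A0 * c + B0 := by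
    intro c
    have h0 : 0 ≤ ∑ k, star (p k * c - q k) * (p k * c - q k) :=
      Finset.sum_nonneg fun k _ => star_mul_self_nonneg _
    have hexp : ∑ k, star (p k * c - q k) * (p k * c - q k)
        = star c * A0 * c - (star c * X + star X * c) + B0 := by
      rw [hA0, hX, hXstar, hB0, Finset.sum_mul, Finset.mul_sum, Finset.sum_mul, Finset.mul_sum,
        ← Finset.sum_add_distrib, ← Finset.sum_sub_distrib, ← Finset.sum_add_distrib]
      refine Finset.sum_congr rfl fun k _ => ?_
      simp only [star_sub, star_mul, star_star, sub_mul, mul_sub]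
      noncomm_ring
    rw [hexp] at h0
    calc star c * X + star X * c
        = star c * A0 * c + B0 - (star c * A0 * c - (star c * X + star X * c) + B0) := by abel
      _ ≤ star c * A0 * c + B0 - 0 := by exact sub_le_sub_left h0 _
      _ = star c * A0 * c + B0 := by abel
  rcases eq_or_lt_of_le (norm_nonneg A0) with h0 | hpos
  · -- ‖A0‖ = 0
    have hA00 : A0 = 0 := norm_eq_zero.mp h0.symm
    have hp0 : ∀ k, p k = 0 := by
      intro k
      have h1 : star (p k) * p k ≤ A0 := hA0 ▸
        Finset.single_le_sum (fun j _ => star_mul_self_nonneg (p j)) (Finset.mem_univ k)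
      have h2 : star (p k) * p k = 0 :=
        le_antisymm (hA00 ▸ h1) (star_mul_self_nonneg _)
      have := CStarRing.norm_star_mul_self (x := p k)
      rw [h2, norm_zero] at this
      exact norm_eq_zero.mp (by nlinarith [norm_nonneg (p k)])
    have hX0 : X = 0 := by
      rw [hX]
      exact Finset.sum_eq_zero fun k _ => by rw [hp0 k, star_zero, zero_mul]
    rw [hX0]
    simpa using my_smul_nonneg (norm_nonneg A0) hB0nn
  · -- ‖A0‖ > 0
    set s : ℝ := ‖A0‖⁻¹ with hs
    have hspos : 0 < s := inv_pos.2 hpos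
    have hk := key (s • X)
    have e1 : star (s • X) * X = s • (star X * X) := by
      rw [star_smul, star_trivial, smul_mul_assoc]
    have e2 : star X * (s • X) = s • (star X * X) := by rw [mul_smul_comm]
    have e3 : star (s • X) * A0 * (s • X) = (s * s) • (star X * A0 * X) := by
      rw [star_smul, star_trivial, smul_mul_assoc, smul_mul_assoc, mul_smul_comm, smul_smul]
    rw [e1, e2, e3] at hk
    have hconj : star X * A0 * X ≤ ‖A0‖ • (star X * X) :=
      CStarAlgebra.star_left_conjugate_le_norm_smul (a := X) (IsSelfAdjoint.of_nonneg hA0nn)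
    have e4 : (s * s) • (star X * A0 * X) ≤ s • (star X * X) := by
      calc (s * s) • (star X * A0 * X) ≤ (s * s) • (‖A0‖ • (star X * X)) :=
            my_smul_mono (by positivity) hconj
        _ = s • (star X * X) := by
            rw [smul_smul, mul_assoc, hs, inv_mul_cancel₀ (ne_of_gt hpos), mul_one]
    have e5 : s • (star X * X) + s • (star X * X) ≤ s • (star X * X) + B0 :=
      le_trans hk (add_le_add_left e4 _)
    have e6 : s • (star X * X) ≤ B0 := (add_le_add_iff_left _).mp e5
    calc star X * X = ‖A0‖ • (s • (star X * X)) := by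
          rw [smul_smul, hs, mul_inv_cancel₀ (ne_of_gt hpos), one_smul]
      _ ≤ ‖A0‖ • B0 := my_smul_mono (norm_nonneg _) e6

lemma myOrth {p q z w : C} (hp : 0 ≤ p) (hq : 0 ≤ q) (hpq : p * q = 0)
    {α β : ℝ} (hz : star z * z ≤ α • p) (hw : w * star w ≤ β • q) : z * w = 0 := by
  have hpsa := IsSelfAdjoint.of_nonneg hp
  have hqsa := IsSelfAdjoint.of_nonneg hq
  have hqp : q * p = 0 := by
    have := congrArg star hpq
    rwa [star_mul, hpsa.star_eq, hqsa.star_eq, star_zero] at this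
  set s := CFC.sqrt p with hsdef
  have hs_nn : (0:C) ≤ s := CFC.sqrt_nonneg _
  have hs_sa : IsSelfAdjoint s := IsSelfAdjoint.of_nonneg hs_nn
  have hss : s * s = p := CFC.sqrt_mul_sqrt_self p hp
  have hkey : s * q * s = 0 := by
    have hsa : IsSelfAdjoint (s * q * s) := by
      rw [IsSelfAdjoint, star_mul, star_mul, hs_sa.star_eq, hqsa.star_eq, mul_assoc]
    have hx : (s * q * s) * (s * q * s) = 0 := by
      have : (s * q * s) * (s * q * s) = s * (q * p * q) * s := by
        rw [← hss]; noncomm_ring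
      rw [this, hqp, zero_mul, mul_zero, zero_mul]
    have hn : ‖s * q * s‖ * ‖s * q * s‖ = 0 := by
      rw [← CStarRing.norm_star_mul_self (x := s * q * s), hsa.star_eq, hx, norm_zero]
    exact norm_eq_zero.mp (mul_self_eq_zero.mp hn)
  -- main estimate
  have h1 : (0:C) ≤ star w * (star z * z) * w := by
    have := star_left_conjugate_le_conjugate hz w
    have h0 : (0:C) ≤ star w * (star z * z) * w := by
      have := star_left_conjugate_le_conjugate (star_mul_self_nonneg z) w
      simpa using this
    exact h0
  have h2 : star w * (star z * z) * w ≤ α • (star w * p * w) := by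
    calc star w * (star z * z) * w ≤ star w * (α • p) * w := star_left_conjugate_le_conjugate hz w
      _ = α • (star w * p * w) := by rw [mul_smul_comm, smul_mul_assoc]
  have hnorm1 : ‖star (z * w) * (z * w)‖ ≤ |α| * ‖star w * p * w‖ := by
    have e : star (z * w) * (z * w) = star w * (star z * z) * w := by
      rw [star_mul]; noncomm_ring
    rw [e]
    calc ‖star w * (star z * z) * w‖ ≤ ‖α • (star w * p * w)‖ :=
          CStarAlgebra.norm_le_norm_of_nonneg_of_le h1 h2
      _ = |α| * ‖star w * p * w‖ := by rw [norm_smul, Real.norm_eq_abs]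
  have hsw : star w * p * w = star (s * w) * (s * w) := by
    rw [star_mul, hs_sa.star_eq, ← hss]; noncomm_ring
  have hzero : ‖s * w‖ * ‖s * w‖ = 0 := by
    have h3 : (0:C) ≤ (s * w) * star (s * w) := mul_star_self_nonneg _
    have h4 : (s * w) * star (s * w) ≤ β • (s * q * s) := by
      have e : (s * w) * star (s * w) = s * (w * star w) * s := by
        rw [star_mul, hs_sa.star_eq]; noncomm_ring
      rw [e]
      calc s * (w * star w) * s ≤ s * (β • q) * s := by
            have := star_left_conjugate_le_conjugate hw s
            rwa [hs_sa.star_eq] at this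
        _ = β • (s * q * s) := by rw [mul_smul_comm, smul_mul_assoc]
    have h5 : (s * w) * star (s * w) ≤ 0 := by
      rw [hkey, smul_zero] at h4; exact h4
    have h6 : (s * w) * star (s * w) = 0 := le_antisymm h5 h3
    rw [← CStarRing.norm_self_mul_star, h6, norm_zero]
  have hsw0 : s * w = 0 := norm_eq_zero.mp (mul_self_eq_zero.mp hzero)
  have : ‖star (z * w) * (z * w)‖ ≤ 0 := by
    rw [hsw] at hnorm1
    rw [hsw0] at hnorm1
    simpa using hnorm1
  have : ‖z * w‖ * ‖z * w‖ ≤ 0 := by rwa [CStarRing.norm_star_mul_self] at this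
  exact norm_eq_zero.mp (mul_self_eq_zero.mp (le_antisymm this (mul_self_nonneg _)))

end CSLemma

namespace OZBump

def clamp01 (s : ℝ) : ℝ := max 0 (min 1 s)

lemma clamp01_continuous : Continuous clamp01 :=
  continuous_const.max (continuous_const.min continuous_id)

lemma clamp01_mono : Monotone clamp01 := fun x y h =>
  max_le_max le_rfl (min_le_min le_rfl h)

lemma clamp01_nonneg (s : ℝ) : 0 ≤ clamp01 s := le_max_left _ _

lemma clamp01_le_one (s : ℝ) : clamp01 s ≤ 1 := max_le zero_le_one (min_le_left _ _)

lemma clamp01_of_nonpos {s : ℝ} (h : s ≤ 0) : clamp01 s = 0 :=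
  max_eq_left (le_trans (min_le_right _ _) h)

lemma clamp01_of_one_le {s : ℝ} (h : 1 ≤ s) : clamp01 s = 1 := by
  rw [clamp01, min_eq_left h, max_eq_right zero_le_one]

lemma clamp01_of_mem {s : ℝ} (h0 : 0 ≤ s) (h1 : s ≤ 1) : clamp01 s = s := by
  rw [clamp01, min_eq_right h1, max_eq_right h0]

/-- the ramp functions -/
def uf (n i : ℕ) (t : ℝ) : ℝ := clamp01 (n * t - i + 1)

/-- the bump functions -/
def bf (n i : ℕ) (t : ℝ) : ℝ := uf n i t - uf n (i + 1) t

lemma uf_continuous (n i : ℕ) : Continuous (uf n i) := by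
  apply clamp01_continuous.comp
  fun_prop

lemma bf_continuous (n i : ℕ) : Continuous (bf n i) :=
  (uf_continuous n i).sub (uf_continuous n (i + 1))

lemma uf_nonneg (n i : ℕ) (t : ℝ) : 0 ≤ uf n i t := clamp01_nonneg _

lemma uf_le_one (n i : ℕ) (t : ℝ) : uf n i t ≤ 1 := clamp01_le_one _

lemma bf_nonneg (n i : ℕ) (t : ℝ) : 0 ≤ bf n i t := by
  rw [bf, sub_nonneg]
  apply clamp01_mono
  push_cast
  linarith

lemma bf_le_one (n i : ℕ) (t : ℝ) : bf n i t ≤ 1 := by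
  rw [bf]
  have := uf_le_one n i t
  have := uf_nonneg n (i + 1) t
  linarith

/-- vanishing of `bf n i` outside `(i-1, i+1)` scaled by `n` -/
lemma bf_eq_zero_of_le {n i : ℕ} {t : ℝ} (h : (n:ℝ) * t ≤ (i:ℝ) - 1) : bf n i t = 0 := by
  rw [bf, uf, uf]
  rw [clamp01_of_nonpos (by push_cast; linarith), clamp01_of_nonpos (by push_cast; linarith),
    sub_zero]

lemma bf_eq_zero_of_ge {n i : ℕ} {t : ℝ} (h : (i:ℝ) + 1 ≤ (n:ℝ) * t) : bf n i t = 0 := by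
  rw [bf, uf, uf]
  rw [clamp01_of_one_le (by push_cast; linarith), clamp01_of_one_le (by push_cast; linarith),
    sub_self]

lemma bf_mul_eq_zero {n i j : ℕ} (hij : i + 2 ≤ j) (t : ℝ) : bf n i t * bf n j t = 0 := by
  rcases le_or_gt ((n:ℝ) * t) ((j:ℝ) - 1) with h | h
  · rw [bf_eq_zero_of_le h, mul_zero]
  · have : (i:ℝ) + 1 ≤ (n:ℝ) * t := by
      have : (i:ℝ) + 2 ≤ (j:ℝ) := by exact_mod_cast hij
      linarith
    rw [bf_eq_zero_of_ge this, zero_mul]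

lemma bf_sum {n : ℕ} {t : ℝ} (h0 : 0 ≤ t) (h1 : t ≤ 1) :
    ∑ i ∈ Finset.range (n + 1), bf n i t = 1 := by
  simp only [bf]
  rw [Finset.sum_range_sub' (fun i => uf n i t) (n + 1)]
  rw [uf, uf, clamp01_of_one_le (by push_cast; nlinarith [Nat.cast_nonneg (α := ℝ) n]),
    clamp01_of_nonpos (by push_cast; nlinarith [Nat.cast_nonneg (α := ℝ) n]), sub_zero]

/-- Abel summation for the weighted sum -/
lemma bf_weighted_abel (n : ℕ) (t : ℝ) : ∀ m : ℕ,
    ∑ i ∈ Finset.range (m + 1), ((i:ℝ)/n) * bf n i t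
      = (1/n) * ∑ i ∈ Finset.range m, uf n (i+1) t - ((m:ℝ)/n) * uf n (m+1) t := by
  intro m
  induction m with
  | zero => simp [bf]
  | succ m ih =>
    rw [Finset.sum_range_succ, ih, Finset.sum_range_succ]
    rw [bf]
    push_cast
    ring

lemma clamp_sum_bounds : ∀ (m : ℕ) (s : ℝ), 0 ≤ s → s ≤ m →
    s - 1 ≤ (∑ j ∈ Finset.range m, clamp01 (s - j)) ∧
      (∑ j ∈ Finset.range m, clamp01 (s - j)) ≤ s := by
  intro m
  induction m with
  | zero => intro s h0 h1; simp at h1 ⊢; constructor <;> linarith [le_antisymm h1 h0]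
  | succ m ih =>
    intro s h0 h1
    rw [Finset.sum_range_succ' (fun j => clamp01 (s - j)) m]
    push_cast
    rcases le_or_gt s 1 with hs | hs
    · have hz : ∀ j ∈ Finset.range m, clamp01 (s - (j + 1)) = 0 := by
        intro j hj
        apply clamp01_of_nonpos
        have : (0:ℝ) ≤ (j:ℝ) := Nat.cast_nonneg j
        push_cast
        linarith
      rw [Finset.sum_congr rfl hz]
      simp only [Finset.sum_const_zero, zero_add, sub_zero]
      rw [clamp01_of_mem h0 hs]
      constructor <;> linarith
    · have h1' : s - 1 ≤ (m:ℕ) := by push_cast at h1 ⊢; linarith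
      obtain ⟨ihl, ihr⟩ := ih (s - 1) (by linarith) h1'
      have hrw : ∀ j ∈ Finset.range m, clamp01 (s - (j + 1)) = clamp01 ((s - 1) - j) := by
        intro j hj; congr 1; push_cast; ring
      rw [Finset.sum_congr rfl hrw]
      simp only [sub_zero]
      rw [clamp01_of_one_le (le_of_lt hs)]
      constructor <;> linarith

lemma bf_weighted_approx {n : ℕ} (hn : 1 ≤ n) {t : ℝ} (h0 : 0 ≤ t) (h1 : t ≤ 1) :
    |∑ i ∈ Finset.range (n + 1), ((i:ℝ)/n) * bf n i t - t| ≤ 1 / n := by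
  have hnR : (0:ℝ) < n := by exact_mod_cast hn
  rw [bf_weighted_abel n t n]
  have hu0 : uf n (n + 1) t = 0 := by
    rw [uf]; apply clamp01_of_nonpos; push_cast; nlinarith
  rw [hu0, mul_zero, sub_zero]
  have hrw : ∀ j ∈ Finset.range n, uf n (j+1) t = clamp01 ((n:ℝ) * t - j) := by
    intro j hj; rw [uf]; congr 1; push_cast; ring
  rw [Finset.sum_congr rfl hrw]
  obtain ⟨hl, hr⟩ := clamp_sum_bounds n ((n:ℝ) * t) (by positivity) (by nlinarith)
  rw [abs_le]
  have hinv : (0:ℝ) < 1 / n := by positivity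
  constructor
  · have h2 := mul_le_mul_of_nonneg_left hl (le_of_lt hinv)
    have hid : (1/(n:ℝ)) * ((n:ℝ)*t - 1) = t - 1/n := by field_simp
    nlinarith
  · have h2 := mul_le_mul_of_nonneg_left hr (le_of_lt hinv)
    have hid : (1/(n:ℝ)) * ((n:ℝ)*t) = t := by field_simp
    nlinarith

end OZBump

open OZBump Finset

section Main
variable {A : Type*} [CStarAlgebra A] [PartialOrder A] [StarOrderedRing A]
variable {C : Type*} [CStarAlgebra C] [PartialOrder C] [StarOrderedRing C]
variable {Θ : A →ₗ[ℂ] C}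

lemma hmono_of (hpos : ∀ x : A, 0 ≤ x → 0 ≤ Θ x) {x y : A} (h : x ≤ y) : Θ x ≤ Θ y := by
  have h2 := hpos _ (sub_nonneg.2 h)
  rw [map_sub] at h2
  exact sub_nonneg.mp h2

lemma hsmulT (Θ : A →ₗ[ℂ] C) (r : ℝ) (x : A) : Θ (r • x) = r • Θ x := by
  rw [← Complex.coe_smul, map_smul, Complex.coe_smul]

lemma hLem (hpos : ∀ x : A, 0 ≤ x → 0 ≤ Θ x)
    (hstar : ∀ x : A, Θ (star x) = star (Θ x))
    (hKS : ∀ x y : A, star (Θ (star x * y)) * Θ (star x * y) ≤ ‖Θ (star x * x)‖ • Θ (star y * y))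
    (horth : ∀ p q : A, 0 ≤ p → 0 ≤ q → p * q = 0 → Θ p * Θ q = 0)
    {x y : A} (hx : 0 ≤ x) (hy : 0 ≤ y) (hxy : x * y = 0) (z : A) :
    Θ x * Θ (y * z) = 0 := by
  have hxsa := IsSelfAdjoint.of_nonneg hx
  have hysa := IsSelfAdjoint.of_nonneg hy
  have hxx : (0:A) ≤ x * x := by
    have := star_mul_self_nonneg x; rwa [hxsa.star_eq] at this
  have hyy : (0:A) ≤ y * y := by
    have := star_mul_self_nonneg y; rwa [hysa.star_eq] at this
  have hp : 0 ≤ Θ (x * x) := hpos _ hxx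
  have hq : 0 ≤ Θ (y * y) := hpos _ hyy
  have hpq : Θ (x * x) * Θ (y * y) = 0 := by
    refine horth _ _ hxx hyy ?_
    calc x * x * (y * y) = x * (x * y) * y := by noncomm_ring
      _ = 0 := by rw [hxy, mul_zero, zero_mul]
  have hz : star (Θ x) * Θ x ≤ ‖Θ 1‖ • Θ (x * x) := by
    have h1 := hKS 1 x
    simpa [hxsa.star_eq] using h1
  have hw : Θ (y * z) * star (Θ (y * z)) ≤ ‖Θ (star z * z)‖ • Θ (y * y) := by
    have h1 := hKS z y
    have h3 : Θ (star z * y) = star (Θ (y * z)) := by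
      rw [← hstar (y * z)]
      congr 1
      rw [star_mul, hysa.star_eq]
    rw [h3, star_star, hysa.star_eq] at h1
    exact h1
  exact myOrth hp hq hpq hz hw

lemma bfcfc_mul_eq_zero {a : A} (hasa : IsSelfAdjoint a) {n i j : ℕ}
    (h : i + 2 ≤ j ∨ j + 2 ≤ i) : cfc (bf n i) a * cfc (bf n j) a = 0 := by
  rw [← cfc_mul _ _ a ((bf_continuous n i).continuousOn) ((bf_continuous n j).continuousOn)]
  have he : (fun t => bf n i t * bf n j t) = fun _ => (0:ℝ) := by
    funext t
    rcases h with h | h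
    · exact bf_mul_eq_zero h t
    · rw [mul_comm]; exact bf_mul_eq_zero h t
  rw [he, cfc_const 0 a hasa, map_zero]

lemma bf_injsum_le_one {n : ℕ} (F : Finset ℕ) (w : ℕ → ℕ)
    (hw : ∀ j ∈ F, w j < n + 1) (hwinj : ∀ j ∈ F, ∀ k ∈ F, w j = w k → j = k)
    {t : ℝ} (h0 : 0 ≤ t) (h1 : t ≤ 1) : ∑ j ∈ F, bf n (w j) t ≤ 1 := by
  calc ∑ j ∈ F, bf n (w j) t = ∑ m ∈ F.image w, bf n m t := (Finset.sum_image (f := fun m => bf n m t) hwinj).symm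
    _ ≤ ∑ m ∈ Finset.range (n+1), bf n m t := by
        refine Finset.sum_le_sum_of_subset_of_nonneg ?_ (fun m _ _ => bf_nonneg n m t)
        intro m hm
        obtain ⟨j, hj, rfl⟩ := Finset.mem_image.mp hm
        exact Finset.mem_range.2 (hw j hj)
    _ = 1 := bf_sum h0 h1

lemma bumpSumFacts {a : A} (hasa : IsSelfAdjoint a)
    (hspec : spectrum ℝ a ⊆ Set.Icc (0:ℝ) 1)
    {n : ℕ} (F : Finset ℕ) (w : ℕ → ℕ)
    (hw : ∀ j ∈ F, w j < n + 1) (hwinj : ∀ j ∈ F, ∀ k ∈ F, w j = w k → j = k) :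
    0 ≤ ∑ j ∈ F, cfc (bf n (w j)) a ∧ (∑ j ∈ F, cfc (bf n (w j)) a) ≤ 1 ∧
      (∑ j ∈ F, cfc (bf n (w j)) a) * (∑ j ∈ F, cfc (bf n (w j)) a) ≤ 1 := by
  have hcont : ∀ j ∈ F, ContinuousOn (fun t => bf n (w j) t) (spectrum ℝ a) :=
    fun j _ => (bf_continuous n (w j)).continuousOn
  have hcontS : ContinuousOn (fun t => ∑ j ∈ F, bf n (w j) t) (spectrum ℝ a) :=
    (continuous_finset_sum F fun j _ => bf_continuous n (w j)).continuousOn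
  have hcfc : ∑ j ∈ F, cfc (bf n (w j)) a = cfc (fun t => ∑ j ∈ F, bf n (w j) t) a := by
    rw [← cfc_sum (fun j => bf n (w j)) a F hcont]
    congr 1
    funext t
    exact Finset.sum_apply t F _
  have hS0 : 0 ≤ ∑ j ∈ F, cfc (bf n (w j)) a := by
    rw [hcfc]
    exact cfc_nonneg fun t _ => Finset.sum_nonneg fun j _ => bf_nonneg n (w j) t
  have hS1 : (∑ j ∈ F, cfc (bf n (w j)) a) ≤ 1 := by
    rw [hcfc]
    calc cfc (fun t => ∑ j ∈ F, bf n (w j) t) a ≤ cfc (fun _ : ℝ => (1:ℝ)) a := by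
          refine cfc_mono (fun t ht => ?_) hcontS continuousOn_const
          exact bf_injsum_le_one F w hw hwinj (hspec ht).1 (hspec ht).2
      _ = 1 := by rw [cfc_const 1 a hasa, map_one]
  refine ⟨hS0, hS1, ?_⟩
  rw [hcfc, ← cfc_mul _ _ a hcontS hcontS]
  calc cfc (fun t => (∑ j ∈ F, bf n (w j) t) * (∑ j ∈ F, bf n (w j) t)) a
      ≤ cfc (fun _ : ℝ => (1:ℝ)) a := by
        refine cfc_mono (fun t ht => ?_) (hcontS.mul hcontS) continuousOn_const
        have hle := bf_injsum_le_one F w hw hwinj (hspec ht).1 (hspec ht).2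
        have hge : 0 ≤ ∑ j ∈ F, bf n (w j) t := Finset.sum_nonneg fun j _ => bf_nonneg n (w j) t
        nlinarith
    _ = 1 := by rw [cfc_const 1 a hasa, map_one]

lemma blockBound (hpos : ∀ x : A, 0 ≤ x → 0 ≤ Θ x)
    (hstar : ∀ x : A, Θ (star x) = star (Θ x))
    (hKS : ∀ x y : A, star (Θ (star x * y)) * Θ (star x * y) ≤ ‖Θ (star x * x)‖ • Θ (star y * y))
    (horth : ∀ p q : A, 0 ≤ p → 0 ≤ q → p * q = 0 → Θ p * Θ q = 0)
    {a b : A} (hasa : IsSelfAdjoint a) (hb : 0 ≤ b)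
    (hspec : spectrum ℝ a ⊆ Set.Icc (0:ℝ) 1)
    {n : ℕ} (F : Finset ℕ) (u v : ℕ → ℕ)
    (hu : ∀ j ∈ F, u j < n + 1) (hv : ∀ j ∈ F, v j < n + 1)
    (huinj : ∀ j ∈ F, ∀ k ∈ F, u j = u k → j = k)
    (hvinj : ∀ j ∈ F, ∀ k ∈ F, v j = v k → j = k)
    (hsep : ∀ j ∈ F, ∀ k ∈ F, j ≠ k → (u j + 2 ≤ v k ∨ v k + 2 ≤ u j)) :
    ‖∑ j ∈ F, Θ (cfc (bf n (u j)) a) * Θ (cfc (bf n (v j)) a * b)‖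
      ≤ ‖Θ 1‖ * Real.sqrt (‖Θ 1‖ * ‖Θ (b * b)‖) := by
  have hbsa := IsSelfAdjoint.of_nonneg hb
  set φ : ℕ → A := fun i => cfc (bf n i) a with hφ
  have hφnn : ∀ i, 0 ≤ φ i := fun i => cfc_nonneg fun t _ => bf_nonneg n i t
  set Ψ := ∑ j ∈ F, φ (u j) with hΨ
  set Ξ := ∑ j ∈ F, φ (v j) with hΞ
  obtain ⟨hΨ0, hΨ1, _⟩ := bumpSumFacts hasa hspec F u hu huinj
  obtain ⟨hΞ0, hΞ1, hΞsq⟩ := bumpSumFacts hasa hspec F v hv hvinj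
  have hexp : ∑ j ∈ F, Θ (φ (u j)) * Θ (φ (v j) * b) = Θ Ψ * Θ (Ξ * b) := by
    have e1 : Θ Ψ = ∑ j ∈ F, Θ (φ (u j)) := by rw [hΨ]; exact map_sum Θ _ F
    have e2 : Θ (Ξ * b) = ∑ k ∈ F, Θ (φ (v k) * b) := by
      rw [hΞ, Finset.sum_mul]; exact map_sum Θ _ F
    rw [e1, e2, Finset.sum_mul_sum]
    refine Finset.sum_congr rfl fun j hj => ?_
    refine (Finset.sum_eq_single_of_mem
      (f := fun k => Θ (φ (u j)) * Θ (φ (v k) * b)) j hj fun k hk hkj => ?_).symm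
    exact hLem hpos hstar hKS horth (hφnn (u j)) (hφnn (v k))
      (bfcfc_mul_eq_zero hasa (hsep j hj k hk (Ne.symm hkj))) b
  rw [hexp]
  have hnΨ : ‖Θ Ψ‖ ≤ ‖Θ 1‖ :=
    CStarAlgebra.norm_le_norm_of_nonneg_of_le (hpos _ hΨ0) (hmono_of hpos hΨ1)
  have hΞsa : IsSelfAdjoint Ξ := IsSelfAdjoint.of_nonneg hΞ0
  have hnΞb : ‖Θ (Ξ * b)‖ ≤ Real.sqrt (‖Θ 1‖ * ‖Θ (b * b)‖) := by
    have h1 := hKS Ξ b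
    rw [hΞsa.star_eq, hbsa.star_eq] at h1
    have h2 : ‖Θ (Ξ * b)‖ * ‖Θ (Ξ * b)‖ ≤ ‖Θ (Ξ * Ξ)‖ * ‖Θ (b * b)‖ := by
      rw [← CStarRing.norm_star_mul_self]
      calc ‖star (Θ (Ξ * b)) * Θ (Ξ * b)‖ ≤ ‖(‖Θ (Ξ * Ξ)‖ : ℝ) • Θ (b * b)‖ :=
            CStarAlgebra.norm_le_norm_of_nonneg_of_le (star_mul_self_nonneg _) h1
        _ = ‖Θ (Ξ * Ξ)‖ * ‖Θ (b * b)‖ := by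
            rw [norm_smul, Real.norm_eq_abs, abs_of_nonneg (norm_nonneg _)]
    have h3 : ‖Θ (Ξ * Ξ)‖ ≤ ‖Θ 1‖ := by
      have h0 : (0:A) ≤ Ξ * Ξ := by
        have := star_mul_self_nonneg Ξ; rwa [hΞsa.star_eq] at this
      exact CStarAlgebra.norm_le_norm_of_nonneg_of_le (hpos _ h0) (hmono_of hpos hΞsq)
    calc ‖Θ (Ξ * b)‖ = Real.sqrt (‖Θ (Ξ * b)‖ * ‖Θ (Ξ * b)‖) :=
          (Real.sqrt_mul_self (norm_nonneg _)).symm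
      _ ≤ Real.sqrt (‖Θ 1‖ * ‖Θ (b * b)‖) := by
          refine Real.sqrt_le_sqrt ?_
          calc ‖Θ (Ξ * b)‖ * ‖Θ (Ξ * b)‖ ≤ ‖Θ (Ξ * Ξ)‖ * ‖Θ (b * b)‖ := h2
            _ ≤ ‖Θ 1‖ * ‖Θ (b * b)‖ := mul_le_mul_of_nonneg_right h3 (norm_nonneg _)
  calc ‖Θ Ψ * Θ (Ξ * b)‖ ≤ ‖Θ Ψ‖ * ‖Θ (Ξ * b)‖ := norm_mul_le _ _
    _ ≤ ‖Θ 1‖ * Real.sqrt (‖Θ 1‖ * ‖Θ (b * b)‖) :=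
        mul_le_mul hnΨ hnΞb (norm_nonneg _) (norm_nonneg _)


lemma mainPos1 (hpos : ∀ x : A, 0 ≤ x → 0 ≤ Θ x)
    (hstar : ∀ x : A, Θ (star x) = star (Θ x))
    (hKS : ∀ x y : A, star (Θ (star x * y)) * Θ (star x * y) ≤ ‖Θ (star x * x)‖ • Θ (star y * y))
    (horth : ∀ p q : A, 0 ≤ p → 0 ≤ q → p * q = 0 → Θ p * Θ q = 0)
    {a b : A} (ha : 0 ≤ a) (hna : ‖a‖ ≤ 1) (hb : 0 ≤ b) :
    Θ a * Θ b = Θ 1 * Θ (a * b) := by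
  rcases subsingleton_or_nontrivial A with hsub | hnt
  · have h1 : a = 1 := Subsingleton.elim _ _
    have h2 : b = 1 := Subsingleton.elim _ _
    rw [h1, h2, one_mul]
  have hasa := IsSelfAdjoint.of_nonneg ha
  have hbsa := IsSelfAdjoint.of_nonneg hb
  have hspec : spectrum ℝ a ⊆ Set.Icc (0:ℝ) 1 := by
    intro t ht
    refine ⟨spectrum_nonneg_of_nonneg ha ht, ?_⟩
    have h1 := spectrum.norm_le_norm_of_mem ht
    rw [Real.norm_eq_abs] at h1
    linarith [le_abs_self t]
  set K := Real.sqrt (‖Θ 1‖ * ‖Θ (b*b)‖) with hKdef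
  have hKnn : 0 ≤ K := Real.sqrt_nonneg _
  have main : ∀ n : ℕ, 1 ≤ n →
      ‖Θ a * Θ b - Θ 1 * Θ (a*b)‖ ≤ (6*(‖Θ 1‖*K) + 3*‖Θ 1‖*‖Θ b‖ + ‖Θ 1‖*K) / n := by
    intro n hn
    have hnR : (0:ℝ) < n := by exact_mod_cast hn
    set φ : ℕ → A := fun i => cfc (bf n i) a with hφdef
    have hφcont : ∀ i, ContinuousOn (bf n i) (spectrum ℝ a) :=
      fun i => (bf_continuous n i).continuousOn
    have hφnn : ∀ i, 0 ≤ φ i := fun i => cfc_nonneg fun t _ => bf_nonneg n i t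
    have hφsa : ∀ i, IsSelfAdjoint (φ i) := fun i => .of_nonneg (hφnn i)
    set R := Finset.range (n+1) with hRdef
    have hsumφ : ∑ i ∈ R, φ i = 1 := by
      calc ∑ i ∈ R, φ i = cfc (∑ i ∈ R, bf n i) a :=
            (cfc_sum (fun i => bf n i) a R (fun i _ => hφcont i)).symm
        _ = cfc (fun t => ∑ i ∈ R, bf n i t) a := by
            congr 1; funext t; exact Finset.sum_apply t R _
        _ = cfc (fun _ : ℝ => (1:ℝ)) a :=
            cfc_congr (fun t ht => bf_sum (hspec ht).1 (hspec ht).2)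
        _ = 1 := by rw [cfc_const 1 a hasa, map_one]
    set gw : ℝ → ℝ := fun t => ∑ i ∈ R, ((i:ℝ)/(n:ℝ)) * bf n i t with hgwdef
    have hgwcont : ContinuousOn gw (spectrum ℝ a) :=
      (continuous_finset_sum R fun i _ => continuous_const.mul (bf_continuous n i)).continuousOn
    set a' : A := ∑ i ∈ R, ((i:ℝ)/(n:ℝ)) • φ i with ha'def
    have ha'cfc : a' = cfc gw a := by
      rw [ha'def]
      calc ∑ i ∈ R, ((i:ℝ)/(n:ℝ)) • φ i
          = ∑ i ∈ R, cfc (fun t => ((i:ℝ)/(n:ℝ)) * bf n i t) a := by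
            refine Finset.sum_congr rfl fun i _ => ?_
            rw [← cfc_smul ((i:ℝ)/(n:ℝ)) (bf n i) a (hφcont i)]
            congr 1
        _ = cfc (∑ i ∈ R, fun t => ((i:ℝ)/(n:ℝ)) * bf n i t) a :=
            (cfc_sum _ a R
              (fun i _ => (continuous_const.mul (bf_continuous n i)).continuousOn)).symm
        _ = cfc gw a := by congr 1; funext t; exact Finset.sum_apply t R _
    have ha'sa : IsSelfAdjoint a' := by
      rw [ha'def, IsSelfAdjoint, star_sum]
      exact Finset.sum_congr rfl fun i _ => by
        rw [star_smul, star_trivial, (hφsa i).star_eq]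
    set e : A := a - a' with hedef
    have hesa : IsSelfAdjoint e := hasa.sub ha'sa
    have hcontw : ContinuousOn (fun t : ℝ => t - gw t) (spectrum ℝ a) :=
      (continuous_id.continuousOn).sub hgwcont
    have hecfc : e = cfc (fun t : ℝ => t - gw t) a := by
      have h9 := cfc_sub (fun t : ℝ => t) gw a continuous_id.continuousOn hgwcont
      rw [cfc_id' ℝ a hasa] at h9
      rw [hedef, ha'cfc]
      exact h9.symm
    have heptw : ∀ t ∈ spectrum ℝ a, |t - gw t| ≤ 1/(n:ℝ) := by
      intro t ht
      rw [abs_sub_comm]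
      exact bf_weighted_approx hn (hspec ht).1 (hspec ht).2
    have heub : e ≤ (1/(n:ℝ)) • 1 := by
      rw [hecfc]
      calc cfc (fun t : ℝ => t - gw t) a ≤ cfc (fun _ : ℝ => 1/(n:ℝ)) a :=
            cfc_mono (fun t ht => (abs_le.mp (heptw t ht)).2) hcontw continuousOn_const
        _ = (1/(n:ℝ)) • 1 := by rw [cfc_const _ a hasa, Algebra.algebraMap_eq_smul_one]
    have helb : -((1/(n:ℝ)) • 1) ≤ e := by
      rw [hecfc]
      calc -((1/(n:ℝ)) • (1:A)) = cfc (fun _ : ℝ => -(1/(n:ℝ))) a := by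
            rw [cfc_const _ a hasa, map_neg, Algebra.algebraMap_eq_smul_one]
        _ ≤ cfc (fun t : ℝ => t - gw t) a :=
            cfc_mono (fun t ht => (abs_le.mp (heptw t ht)).1) continuousOn_const hcontw
    have heesq : e * e ≤ ((1/(n:ℝ))^2) • 1 := by
      rw [hecfc, ← cfc_mul _ _ a hcontw hcontw]
      calc cfc (fun t : ℝ => (t - gw t) * (t - gw t)) a
          ≤ cfc (fun _ : ℝ => (1/(n:ℝ))^2) a := by
            refine cfc_mono (fun t ht => ?_) (hcontw.mul hcontw) continuousOn_const
            have h1 := abs_le.mp (heptw t ht)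
            nlinarith [h1.1, h1.2]
        _ = ((1/(n:ℝ))^2) • 1 := by rw [cfc_const _ a hasa, Algebra.algebraMap_eq_smul_one]
    -- C-side
    set Φ : ℕ → C := fun i => Θ (φ i) with hΦdef
    set Φb : ℕ → C := fun i => Θ (φ i * b) with hΦbdef
    have hW0 : ∀ j i : ℕ, (j + 2 ≤ i ∨ i + 2 ≤ j) → Φ j * Φb i = 0 := fun j i h =>
      hLem hpos hstar hKS horth (hφnn j) (hφnn i) (bfcfc_mul_eq_zero hasa h) b
    have hΘa : Θ a = (∑ i ∈ R, ((i:ℝ)/(n:ℝ)) • Φ i) + Θ e := by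
      have h1 : a = a' + e := by rw [hedef]; abel
      rw [h1, map_add]
      congr 1
      rw [ha'def, map_sum]
      exact Finset.sum_congr rfl fun i _ => hsmulT Θ _ _
    have hΘb : Θ b = ∑ i ∈ R, Φb i := by
      have h1 : b = ∑ i ∈ R, φ i * b := by rw [← Finset.sum_mul, hsumφ, one_mul]
      conv_lhs => rw [h1]
      exact map_sum Θ _ R
    have hΘab : Θ (a * b) = (∑ j ∈ R, ((j:ℝ)/(n:ℝ)) • Φb j) + Θ (e * b) := by
      have h1 : a * b = a' * b + e * b := by rw [hedef]; noncomm_ring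
      rw [h1, map_add]
      congr 1
      rw [ha'def, Finset.sum_mul, map_sum]
      refine Finset.sum_congr rfl fun j _ => ?_
      rw [smul_mul_assoc, hsmulT Θ]
    have hHsum : Θ 1 = ∑ i ∈ R, Φ i := by
      rw [← hsumφ]; exact map_sum Θ _ R
    set S1 : C := ∑ j ∈ R, ∑ i ∈ R, ((j:ℝ)/(n:ℝ)) • (Φ j * Φb i) with hS1def
    set S2 : C := ∑ j ∈ R, ∑ i ∈ R, ((j:ℝ)/(n:ℝ)) • (Φ i * Φb j) with hS2def
    have hS1 : Θ a * Θ b = S1 + Θ e * Θ b := by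
      rw [hΘa, hΘb, add_mul, Finset.sum_mul, hS1def]
      congr 1
      refine Finset.sum_congr rfl fun j _ => ?_
      rw [smul_mul_assoc, Finset.mul_sum, Finset.smul_sum]
    have hS2 : Θ 1 * Θ (a*b) = S2 + Θ 1 * Θ (e*b) := by
      rw [hΘab, mul_add, hS2def]
      congr 1
      rw [Finset.mul_sum]
      refine Finset.sum_congr rfl fun j _ => ?_
      rw [mul_smul_comm, hHsum, Finset.sum_mul, Finset.smul_sum]
    have hS2' : S2 = ∑ j ∈ R, ∑ i ∈ R, ((i:ℝ)/(n:ℝ)) • (Φ j * Φb i) := by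
      rw [hS2def]; exact Finset.sum_comm
    set V : C := ∑ j ∈ Finset.range n, (Φ j * Φb (j+1) - Φ (j+1) * Φb j) with hVdef
    have hdiff : S1 - S2 = (-(1/(n:ℝ))) • V := by
      have h1 : S1 - S2 = ∑ j ∈ R, ∑ i ∈ R,
          (((j:ℝ)/(n:ℝ)) - ((i:ℝ)/(n:ℝ))) • (Φ j * Φb i) := by
        rw [hS1def, hS2', ← Finset.sum_sub_distrib]
        refine Finset.sum_congr rfl fun j _ => ?_
        rw [← Finset.sum_sub_distrib]
        exact Finset.sum_congr rfl fun i _ => (sub_smul _ _ _).symm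
      set g : ℕ → ℕ → C := fun j i => (((j:ℝ)/(n:ℝ)) - ((i:ℝ)/(n:ℝ))) • (Φ j * Φb i) with hgdef
      have hgzero : ∀ j, ∀ i, ¬(i = j+1) → ¬(j = i+1) → g j i = 0 := by
        intro j i h1 h2
        rcases eq_or_ne i j with rfl | hne
        · rw [hgdef]; simp
        · have hsep : j + 2 ≤ i ∨ i + 2 ≤ j := by omega
          rw [hgdef]
          simp only
          rw [hW0 j i hsep, smul_zero]
      have h2 : ∀ j ∈ R, ∀ i ∈ R, g j i
          = (if i = j+1 then g j i else 0) + (if j = i+1 then g j i else 0) := by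
        intro j _ i _
        by_cases hc1 : i = j+1
        · have hc2 : ¬(j = i+1) := by omega
          rw [if_pos hc1, if_neg hc2, add_zero]
        · by_cases hc2 : j = i+1
          · rw [if_neg hc1, if_pos hc2, zero_add]
          · rw [if_neg hc1, if_neg hc2, add_zero, hgzero j i hc1 hc2]
      have h3 : S1 - S2 = (∑ j ∈ R, ∑ i ∈ R, if i = j+1 then g j i else 0)
          + (∑ j ∈ R, ∑ i ∈ R, if j = i+1 then g j i else 0) := by
        rw [h1, ← Finset.sum_add_distrib]
        refine Finset.sum_congr rfl fun j hj => ?_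
        rw [← Finset.sum_add_distrib]
        exact Finset.sum_congr rfl fun i hi => h2 j hj i hi
      have h4 : (∑ j ∈ R, ∑ i ∈ R, if i = j+1 then g j i else 0)
          = ∑ j ∈ Finset.range n, g j (j+1) := by
        rw [Finset.sum_congr rfl (fun j _ => Finset.sum_ite_eq' R (j+1) (fun i => g j i))]
        rw [hRdef, Finset.sum_range_succ, if_neg (by simp), add_zero]
        refine Finset.sum_congr rfl fun j hj => ?_
        rw [if_pos (Finset.mem_range.2 (Nat.succ_lt_succ (Finset.mem_range.1 hj)))]
      have h5 : (∑ j ∈ R, ∑ i ∈ R, if j = i+1 then g j i else 0)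
          = ∑ i ∈ Finset.range n, g (i+1) i := by
        rw [Finset.sum_comm]
        rw [Finset.sum_congr rfl (fun i _ => Finset.sum_ite_eq' R (i+1) (fun j => g j i))]
        rw [hRdef, Finset.sum_range_succ, if_neg (by simp), add_zero]
        refine Finset.sum_congr rfl fun i hi => ?_
        rw [if_pos (Finset.mem_range.2 (Nat.succ_lt_succ (Finset.mem_range.1 hi)))]
      rw [h3, h4, h5, hVdef, Finset.smul_sum, ← Finset.sum_add_distrib]
      refine Finset.sum_congr rfl fun j _ => ?_
      rw [hgdef]
      simp only
      have c1 : ((j:ℝ)/(n:ℝ)) - (((j:ℕ)+1:ℕ):ℝ)/(n:ℝ) = -(1/(n:ℝ)) := by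
        push_cast; field_simp; ring
      have c2 : ((((j:ℕ)+1:ℕ):ℝ)/(n:ℝ)) - ((j:ℝ)/(n:ℝ)) = 1/(n:ℝ) := by
        push_cast; field_simp; ring
      rw [c1, c2, smul_sub]
      module
    -- norm of V
    have hVbound : ‖V‖ ≤ 6 * (‖Θ 1‖ * K) := by
      have hfib : ∀ (Wf : ℕ → C), ∑ j ∈ Finset.range n, Wf j
          = ∑ r ∈ Finset.range 3,
              ∑ j ∈ (Finset.range n).filter (fun j => j % 3 = r), Wf j :=
        fun Wf => (Finset.sum_fiberwise_of_maps_to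
          (fun j _ => Finset.mem_range.2 (Nat.mod_lt j (by norm_num))) Wf).symm
      have hE1b : ‖∑ j ∈ Finset.range n, Φ j * Φb (j+1)‖ ≤ 3 * (‖Θ 1‖ * K) := by
        rw [hfib]
        calc ‖∑ r ∈ Finset.range 3,
              ∑ j ∈ (Finset.range n).filter (fun j => j % 3 = r), Φ j * Φb (j+1)‖
            ≤ ∑ r ∈ Finset.range 3,
              ‖∑ j ∈ (Finset.range n).filter (fun j => j % 3 = r), Φ j * Φb (j+1)‖ :=
              norm_sum_le _ _
          _ ≤ ∑ _r ∈ Finset.range 3, (‖Θ 1‖ * K) := by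
              refine Finset.sum_le_sum fun r _ => ?_
              have hb1 := blockBound hpos hstar hKS horth hasa hb hspec
                ((Finset.range n).filter (fun j => j % 3 = r)) (fun j => j) (fun j => j+1)
                (fun j hj => by
                  simp only [Finset.mem_filter, Finset.mem_range] at hj
                  show j < n + 1; omega)
                (fun j hj => by
                  simp only [Finset.mem_filter, Finset.mem_range] at hj
                  show j + 1 < n + 1; omega)
                (fun j _ k _ h => h)
                (fun j _ k _ h => Nat.succ_injective h)
                (fun j hj k hk hne => by
                  simp only [Finset.mem_filter, Finset.mem_range] at hj hk
                  show j + 2 ≤ k + 1 ∨ (k + 1) + 2 ≤ j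
                  omega)
              rw [hKdef]
              simpa only [hΦdef, hΦbdef, hφdef] using hb1
          _ = 3 * (‖Θ 1‖ * K) := by
              rw [Finset.sum_const, Finset.card_range, nsmul_eq_mul]
              norm_num
      have hE2b : ‖∑ j ∈ Finset.range n, Φ (j+1) * Φb j‖ ≤ 3 * (‖Θ 1‖ * K) := by
        rw [hfib]
        calc ‖∑ r ∈ Finset.range 3,
              ∑ j ∈ (Finset.range n).filter (fun j => j % 3 = r), Φ (j+1) * Φb j‖
            ≤ ∑ r ∈ Finset.range 3,
              ‖∑ j ∈ (Finset.range n).filter (fun j => j % 3 = r), Φ (j+1) * Φb j‖ :=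
              norm_sum_le _ _
          _ ≤ ∑ _r ∈ Finset.range 3, (‖Θ 1‖ * K) := by
              refine Finset.sum_le_sum fun r _ => ?_
              have hb1 := blockBound hpos hstar hKS horth hasa hb hspec
                ((Finset.range n).filter (fun j => j % 3 = r)) (fun j => j+1) (fun j => j)
                (fun j hj => by
                  simp only [Finset.mem_filter, Finset.mem_range] at hj
                  show j + 1 < n + 1; omega)
                (fun j hj => by
                  simp only [Finset.mem_filter, Finset.mem_range] at hj
                  show j < n + 1; omega)
                (fun j _ k _ h => Nat.succ_injective h)
                (fun j _ k _ h => h)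
                (fun j hj k hk hne => by
                  simp only [Finset.mem_filter, Finset.mem_range] at hj hk
                  show (j + 1) + 2 ≤ k ∨ k + 2 ≤ j + 1
                  omega)
              rw [hKdef]
              simpa only [hΦdef, hΦbdef, hφdef] using hb1
          _ = 3 * (‖Θ 1‖ * K) := by
              rw [Finset.sum_const, Finset.card_range, nsmul_eq_mul]
              norm_num
      calc ‖V‖ = ‖(∑ j ∈ Finset.range n, Φ j * Φb (j+1))
            - (∑ j ∈ Finset.range n, Φ (j+1) * Φb j)‖ := by
            rw [hVdef, Finset.sum_sub_distrib]
        _ ≤ ‖∑ j ∈ Finset.range n, Φ j * Φb (j+1)‖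
            + ‖∑ j ∈ Finset.range n, Φ (j+1) * Φb j‖ := norm_sub_le _ _
        _ ≤ 3 * (‖Θ 1‖ * K) + 3 * (‖Θ 1‖ * K) := add_le_add hE1b hE2b
        _ = 6 * (‖Θ 1‖ * K) := by ring
    -- error bounds
    have hΘe : ‖Θ e‖ ≤ 3 * ‖Θ 1‖ * (1/(n:ℝ)) := by
      have hδnn : (0:ℝ) ≤ 1/(n:ℝ) := by positivity
      have hX1 : Θ e ≤ (1/(n:ℝ)) • Θ 1 := by
        have h := hmono_of hpos heub
        rwa [hsmulT Θ (1/(n:ℝ)) 1] at h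
      have hX2 : -((1/(n:ℝ)) • Θ 1) ≤ Θ e := by
        have h := hmono_of hpos helb
        rwa [map_neg, hsmulT Θ (1/(n:ℝ)) 1] at h
      have h3 : 0 ≤ Θ e + (1/(n:ℝ)) • Θ 1 := by
        have := add_le_add_left hX2 ((1/(n:ℝ)) • Θ 1)
        simpa using this
      have h4 : Θ e + (1/(n:ℝ)) • Θ 1 ≤ (2*(1/(n:ℝ))) • Θ 1 := by
        have h := add_le_add_left hX1 ((1/(n:ℝ)) • Θ 1)
        calc Θ e + (1/(n:ℝ)) • Θ 1 ≤ (1/(n:ℝ)) • Θ 1 + (1/(n:ℝ)) • Θ 1 := h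
          _ = (2*(1/(n:ℝ))) • Θ 1 := by rw [← add_smul]; ring_nf
      have h5 : ‖Θ e + (1/(n:ℝ)) • Θ 1‖ ≤ 2*(1/(n:ℝ))*‖Θ 1‖ := by
        calc ‖Θ e + (1/(n:ℝ)) • Θ 1‖ ≤ ‖(2*(1/(n:ℝ))) • Θ 1‖ :=
              CStarAlgebra.norm_le_norm_of_nonneg_of_le h3 h4
          _ = 2*(1/(n:ℝ))*‖Θ 1‖ := by
              rw [norm_smul, Real.norm_eq_abs, abs_of_nonneg (by positivity)]
      calc ‖Θ e‖ = ‖(Θ e + (1/(n:ℝ)) • Θ 1) - (1/(n:ℝ)) • Θ 1‖ := by congr 1; abel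
        _ ≤ ‖Θ e + (1/(n:ℝ)) • Θ 1‖ + ‖(1/(n:ℝ)) • Θ 1‖ := norm_sub_le _ _
        _ ≤ 2*(1/(n:ℝ))*‖Θ 1‖ + (1/(n:ℝ))*‖Θ 1‖ := by
            refine add_le_add h5 ?_
            rw [norm_smul, Real.norm_eq_abs, abs_of_nonneg hδnn]
        _ = 3 * ‖Θ 1‖ * (1/(n:ℝ)) := by ring
    have hΘeb : ‖Θ (e * b)‖ ≤ (1/(n:ℝ)) * K := by
      have h1 := hKS e b
      rw [hesa.star_eq, hbsa.star_eq] at h1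
      have h2 : ‖Θ (e*b)‖ * ‖Θ (e*b)‖ ≤ ‖Θ (e*e)‖ * ‖Θ (b*b)‖ := by
        rw [← CStarRing.norm_star_mul_self]
        calc ‖star (Θ (e*b)) * Θ (e*b)‖ ≤ ‖(‖Θ (e*e)‖:ℝ) • Θ (b*b)‖ :=
              CStarAlgebra.norm_le_norm_of_nonneg_of_le (star_mul_self_nonneg _) h1
          _ = ‖Θ (e*e)‖ * ‖Θ (b*b)‖ := by
              rw [norm_smul, Real.norm_eq_abs, abs_of_nonneg (norm_nonneg _)]
      have h3 : ‖Θ (e*e)‖ ≤ (1/(n:ℝ))^2 * ‖Θ 1‖ := by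
        have h0 : (0:A) ≤ e*e := by
          have := star_mul_self_nonneg e; rwa [hesa.star_eq] at this
        have h4 : Θ (e*e) ≤ ((1/(n:ℝ))^2) • Θ 1 := by
          have h := hmono_of hpos heesq
          rwa [hsmulT] at h
        calc ‖Θ (e*e)‖ ≤ ‖((1/(n:ℝ))^2) • Θ 1‖ :=
              CStarAlgebra.norm_le_norm_of_nonneg_of_le (hpos _ h0) h4
          _ = (1/(n:ℝ))^2 * ‖Θ 1‖ := by
              rw [norm_smul, Real.norm_eq_abs, abs_of_nonneg (by positivity)]
      calc ‖Θ (e*b)‖ = Real.sqrt (‖Θ (e*b)‖ * ‖Θ (e*b)‖) :=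
            (Real.sqrt_mul_self (norm_nonneg _)).symm
        _ ≤ Real.sqrt ((1/(n:ℝ))^2 * (‖Θ 1‖ * ‖Θ (b*b)‖)) := by
            refine Real.sqrt_le_sqrt ?_
            calc ‖Θ (e*b)‖ * ‖Θ (e*b)‖ ≤ ‖Θ (e*e)‖ * ‖Θ (b*b)‖ := h2
              _ ≤ ((1/(n:ℝ))^2 * ‖Θ 1‖) * ‖Θ (b*b)‖ :=
                  mul_le_mul_of_nonneg_right h3 (norm_nonneg _)
              _ = (1/(n:ℝ))^2 * (‖Θ 1‖ * ‖Θ (b*b)‖) := by ring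
        _ = (1/(n:ℝ)) * K := by
            rw [Real.sqrt_mul (by positivity), Real.sqrt_sq (by positivity), hKdef]
    -- assembly
    have hfinal : Θ a * Θ b - Θ 1 * Θ (a*b)
        = (S1 - S2) + (Θ e * Θ b - Θ 1 * Θ (e*b)) := by
      rw [hS1, hS2]; abel
    rw [hfinal]
    have hb1 : ‖S1 - S2‖ ≤ (1/(n:ℝ)) * (6 * (‖Θ 1‖ * K)) := by
      rw [hdiff, norm_smul, Real.norm_eq_abs, abs_neg, abs_of_nonneg (by positivity)]
      exact mul_le_mul_of_nonneg_left hVbound (by positivity)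
    have hb2 : ‖Θ e * Θ b‖ ≤ 3 * ‖Θ 1‖ * (1/(n:ℝ)) * ‖Θ b‖ := by
      calc ‖Θ e * Θ b‖ ≤ ‖Θ e‖ * ‖Θ b‖ := norm_mul_le _ _
        _ ≤ (3 * ‖Θ 1‖ * (1/(n:ℝ))) * ‖Θ b‖ :=
            mul_le_mul_of_nonneg_right hΘe (norm_nonneg _)
    have hb3 : ‖Θ 1 * Θ (e*b)‖ ≤ ‖Θ 1‖ * ((1/(n:ℝ)) * K) := by
      calc ‖Θ 1 * Θ (e*b)‖ ≤ ‖Θ 1‖ * ‖Θ (e*b)‖ := norm_mul_le _ _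
        _ ≤ ‖Θ 1‖ * ((1/(n:ℝ)) * K) := mul_le_mul_of_nonneg_left hΘeb (norm_nonneg _)
    calc ‖(S1 - S2) + (Θ e * Θ b - Θ 1 * Θ (e*b))‖
        ≤ ‖S1 - S2‖ + ‖Θ e * Θ b - Θ 1 * Θ (e*b)‖ := norm_add_le _ _
      _ ≤ ‖S1 - S2‖ + (‖Θ e * Θ b‖ + ‖Θ 1 * Θ (e*b)‖) :=
          add_le_add_right (norm_sub_le _ _) _
      _ ≤ (1/(n:ℝ)) * (6 * (‖Θ 1‖ * K))
          + (3 * ‖Θ 1‖ * (1/(n:ℝ)) * ‖Θ b‖ + ‖Θ 1‖ * ((1/(n:ℝ)) * K)) :=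
          add_le_add hb1 (add_le_add hb2 hb3)
      _ = (6*(‖Θ 1‖*K) + 3*‖Θ 1‖*‖Θ b‖ + ‖Θ 1‖*K) / n := by
          field_simp
          ring
  -- limit argument
  have h0 : Filter.Tendsto
      (fun n : ℕ => (6*(‖Θ 1‖*K) + 3*‖Θ 1‖*‖Θ b‖ + ‖Θ 1‖*K) / n) Filter.atTop (nhds 0) :=
    tendsto_const_div_atTop_nhds_zero_nat _
  have hle : ‖Θ a * Θ b - Θ 1 * Θ (a*b)‖ ≤ 0 :=
    ge_of_tendsto h0 (Filter.eventually_atTop.2 ⟨1, fun n hn => main n hn⟩)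
  have hz := norm_le_zero_iff.mp hle
  exact sub_eq_zero.mp hz


lemma mainPos (hpos : ∀ x : A, 0 ≤ x → 0 ≤ Θ x)
    (hstar : ∀ x : A, Θ (star x) = star (Θ x))
    (hKS : ∀ x y : A, star (Θ (star x * y)) * Θ (star x * y) ≤ ‖Θ (star x * x)‖ • Θ (star y * y))
    (horth : ∀ p q : A, 0 ≤ p → 0 ≤ q → p * q = 0 → Θ p * Θ q = 0)
    {a b : A} (ha : 0 ≤ a) (hb : 0 ≤ b) :
    Θ a * Θ b = Θ 1 * Θ (a * b) := by
  rcases eq_or_ne a 0 with rfl | hane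
  · rw [map_zero, zero_mul, zero_mul, map_zero, mul_zero]
  · have hr : (0:ℝ) < ‖a‖ := norm_pos_iff.2 hane
    set c : A := (‖a‖⁻¹ : ℝ) • a with hcdef
    have hc0 : 0 ≤ c := by
      have hsa' : IsSelfAdjoint (CFC.sqrt a) := .of_nonneg (CFC.sqrt_nonneg _)
      have h1 : c = star (Real.sqrt ‖a‖⁻¹ • CFC.sqrt a) * (Real.sqrt ‖a‖⁻¹ • CFC.sqrt a) := by
        rw [star_smul, star_trivial, smul_mul_smul_comm, Real.mul_self_sqrt (by positivity),
          hsa'.star_eq, CFC.sqrt_mul_sqrt_self a ha, hcdef]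
      rw [h1]; exact star_mul_self_nonneg _
    have hcn : ‖c‖ ≤ 1 := by
      rw [hcdef, norm_smul, Real.norm_eq_abs, abs_of_nonneg (by positivity),
        inv_mul_cancel₀ (ne_of_gt hr)]
    have hkey := mainPos1 hpos hstar hKS horth hc0 hcn hb
    have hac : a = ((‖a‖:ℝ) : ℂ) • c := by
      rw [hcdef, Complex.coe_smul, smul_smul, mul_inv_cancel₀ (ne_of_gt hr), one_smul]
    have hΘac : Θ a = ((‖a‖:ℝ) : ℂ) • Θ c := by
      conv_lhs => rw [hac, map_smul]
    have habc : ((‖a‖:ℝ) : ℂ) • (c * b) = a * b := by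
      conv_rhs => rw [hac]
      exact (smul_mul_assoc _ _ _).symm
    calc Θ a * Θ b = (((‖a‖:ℝ):ℂ) • Θ c) * Θ b := by rw [hΘac]
      _ = ((‖a‖:ℝ):ℂ) • (Θ c * Θ b) := smul_mul_assoc _ _ _
      _ = ((‖a‖:ℝ):ℂ) • (Θ 1 * Θ (c * b)) := by rw [hkey]
      _ = Θ 1 * (((‖a‖:ℝ):ℂ) • Θ (c * b)) := (mul_smul_comm _ _ _).symm
      _ = Θ 1 * Θ (((‖a‖:ℝ):ℂ) • (c * b)) := by rw [map_smul]
      _ = Θ 1 * Θ (a * b) := by rw [habc]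

lemma mainAll (hpos : ∀ x : A, 0 ≤ x → 0 ≤ Θ x)
    (hstar : ∀ x : A, Θ (star x) = star (Θ x))
    (hKS : ∀ x y : A, star (Θ (star x * y)) * Θ (star x * y) ≤ ‖Θ (star x * x)‖ • Θ (star y * y))
    (horth : ∀ p q : A, 0 ≤ p → 0 ≤ q → p * q = 0 → Θ p * Θ q = 0)
    (a b : A) : Θ a * Θ b = Θ 1 * Θ (a * b) := by
  set F : A →ₗ[ℂ] A →ₗ[ℂ] C := LinearMap.mk₂ ℂ (fun a b => Θ a * Θ b - Θ 1 * Θ (a*b))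
    (fun a₁ a₂ b => by simp only [map_add, add_mul, mul_add]; abel)
    (fun r a b => by simp only [map_smul, smul_mul_assoc, mul_smul_comm, ← smul_sub])
    (fun a b₁ b₂ => by simp only [map_add, mul_add]; abel)
    (fun r a b => by simp only [map_smul, mul_smul_comm, ← smul_sub]) with hFdef
  have hFapp : ∀ x y : A, F x y = Θ x * Θ y - Θ 1 * Θ (x*y) := fun x y => by
    rw [hFdef]; rfl
  have hFposb : ∀ b : A, 0 ≤ b → ∀ a : A, F a b = 0 := by
    intro b hb a
    have key : ∀ p : A, 0 ≤ p → F p b = 0 := fun p hp => by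
      rw [hFapp, mainPos hpos hstar hKS horth hp hb, sub_self]
    have hdec := CStarAlgebra.linear_combination_nonneg a
    calc F a b = F (((realPart a : A)⁺ - (realPart a : A)⁻)
          + (Complex.I • (imaginaryPart a : A)⁺ - Complex.I • (imaginaryPart a : A)⁻)) b := by
          rw [hdec]
      _ = 0 := by
          simp only [map_add, map_sub, map_smul, LinearMap.add_apply, LinearMap.sub_apply,
            LinearMap.smul_apply]
          rw [key _ (CFC.posPart_nonneg _), key _ (CFC.negPart_nonneg _),
            key _ (CFC.posPart_nonneg _), key _ (CFC.negPart_nonneg _)]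
          simp
  have hFall : F a b = 0 := by
    have key : ∀ q : A, 0 ≤ q → F a q = 0 := fun q hq => hFposb q hq a
    have hdec := CStarAlgebra.linear_combination_nonneg b
    calc F a b = F a (((realPart b : A)⁺ - (realPart b : A)⁻)
          + (Complex.I • (imaginaryPart b : A)⁺ - Complex.I • (imaginaryPart b : A)⁻)) := by
          rw [hdec]
      _ = 0 := by
          simp only [map_add, map_sub, map_smul]
          rw [key _ (CFC.posPart_nonneg _), key _ (CFC.negPart_nonneg _),
            key _ (CFC.posPart_nonneg _), key _ (CFC.negPart_nonneg _)]
          simp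
  rw [hFapp] at hFall
  exact sub_eq_zero.mp hFall

end Main

/-- For a completely positive map `θ : A → B` with `A` unital, `θ` is order zero if and only if
`θ(a)θ(b) = θ(1)θ(ab)` for all `a, b ∈ A`. -/
theorem stmt2 {A B : Type*} [CStarAlgebra A] [NonUnitalCStarAlgebra B] (θ : A →ₗ[ℂ] B)
    (hcp : CompletelyPositive θ) :
    (∀ a b : A, (∃ c, a = star c * c) → (∃ c, b = star c * c) → a * b = 0 →
        θ a * θ b = 0) ↔
      ∀ a b : A, θ a * θ b = θ 1 * θ (a * b) := by
  constructor
  · intro horth'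
    letI : PartialOrder A := CStarAlgebra.spectralOrder A
    letI : StarOrderedRing A := CStarAlgebra.spectralOrderedRing A
    set Θ : A →ₗ[ℂ] Unitization ℂ B :=
      (Unitization.inrNonUnitalAlgHom ℂ B : B →ₗ[ℂ] Unitization ℂ B).comp θ with hΘdef
    have hΘapp : ∀ x : A, Θ x = (θ x : Unitization ℂ B) := fun x => rfl
    have hsqrt : ∀ x : A, 0 ≤ x → ∃ c : A, x = star c * c := fun x hx =>
      ⟨CFC.sqrt x, by
        rw [(IsSelfAdjoint.of_nonneg (CFC.sqrt_nonneg _)).star_eq, CFC.sqrt_mul_sqrt_self x hx]⟩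
    -- positivity from level-1 complete positivity
    have hpos : ∀ x : A, 0 ≤ x → 0 ≤ Θ x := by
      intro x hx
      obtain ⟨c, hc⟩ := hsqrt x hx
      obtain ⟨P, hP⟩ := hcp 1 (Matrix.of ![![x]])
        ⟨Matrix.of ![![c]], by
          ext i j
          fin_cases i <;> fin_cases j
          simp [Matrix.mul_apply, Matrix.conjTranspose_apply, hc]⟩
      have h1 := congrFun (congrFun hP 0) 0
      simp only [Matrix.map_apply, Matrix.mul_apply, Matrix.conjTranspose_apply,
        Fin.sum_univ_one, Matrix.of_apply, Matrix.cons_val', Matrix.cons_val_zero,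
        Matrix.empty_val', Matrix.cons_val_fin_one] at h1
      rw [hΘapp, h1, Unitization.inr_mul, Unitization.inr_star]
      exact star_mul_self_nonneg _
    -- level-2 matrix data
    have hmat2 : ∀ x y : A, ∃ p q : Fin 2 → Unitization ℂ B,
        Θ (star x * x) = ∑ k, star (p k) * p k ∧
        Θ (star x * y) = ∑ k, star (p k) * q k ∧
        Θ (star y * x) = ∑ k, star (q k) * p k ∧
        Θ (star y * y) = ∑ k, star (q k) * q k := by
      intro x y
      set N : Matrix (Fin 2) (Fin 2) A := Matrix.of ![![x, y], ![0, 0]] with hN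
      have hM : Nᴴ * N = Matrix.of ![![star x * x, star x * y], ![star y * x, star y * y]] := by
        ext i j
        fin_cases i <;> fin_cases j <;>
          simp [hN, Matrix.mul_apply, Matrix.conjTranspose_apply, Fin.sum_univ_two]
      obtain ⟨P, hP⟩ := hcp 2 (Nᴴ * N) ⟨N, rfl⟩
      rw [hM] at hP
      have e00 := congrFun (congrFun hP 0) 0
      have e01 := congrFun (congrFun hP 0) 1
      have e10 := congrFun (congrFun hP 1) 0
      have e11 := congrFun (congrFun hP 1) 1
      simp only [Matrix.map_apply, Matrix.mul_apply, Matrix.conjTranspose_apply,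
        Fin.sum_univ_two, Matrix.of_apply, Matrix.cons_val', Matrix.cons_val_zero,
        Matrix.cons_val_one, Matrix.head_cons, Matrix.empty_val',
        Matrix.cons_val_fin_one, Matrix.head_fin_const] at e00 e01 e10 e11
      refine ⟨fun k => (P k 0 : Unitization ℂ B), fun k => (P k 1 : Unitization ℂ B),
        ?_, ?_, ?_, ?_⟩
      · rw [hΘapp, e00]
        simp [Fin.sum_univ_two, Unitization.inr_add, Unitization.inr_mul, Unitization.inr_star]
      · rw [hΘapp, e01]
        simp [Fin.sum_univ_two, Unitization.inr_add, Unitization.inr_mul, Unitization.inr_star]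
      · rw [hΘapp, e10]
        simp [Fin.sum_univ_two, Unitization.inr_add, Unitization.inr_mul, Unitization.inr_star]
      · rw [hΘapp, e11]
        simp [Fin.sum_univ_two, Unitization.inr_add, Unitization.inr_mul, Unitization.inr_star]
    -- star preservation
    have hpairstar : ∀ x y : A, Θ (star y * x) = star (Θ (star x * y)) := by
      intro x y
      obtain ⟨p, q, _, h01, h10, _⟩ := hmat2 x y
      rw [h01, h10, star_sum]
      exact Finset.sum_congr rfl fun k _ => by rw [star_mul, star_star]
    have hstar : ∀ x : A, Θ (star x) = star (Θ x) := by
      intro x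
      have h := hpairstar x 1
      rw [star_one, one_mul, mul_one] at h
      rw [h, star_star]
    -- Kadison–Schwarz type inequality
    have hKS : ∀ x y : A, star (Θ (star x * y)) * Θ (star x * y)
        ≤ ‖Θ (star x * x)‖ • Θ (star y * y) := by
      intro x y
      obtain ⟨p, q, h00, h01, _, h11⟩ := hmat2 x y
      rw [h00, h01, h11]
      exact myCS p q
    -- orthogonality hypothesis transfer
    have horthΘ : ∀ p q : A, 0 ≤ p → 0 ≤ q → p * q = 0 → Θ p * Θ q = 0 := by
      intro p q hp hq hpq
      rw [hΘapp, hΘapp, ← Unitization.inr_mul,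
        horth' p q (hsqrt p hp) (hsqrt q hq) hpq, Unitization.inr_zero]
    intro a b
    have hmain := mainAll hpos hstar hKS horthΘ a b
    apply Unitization.inr_injective (R := ℂ)
    rw [Unitization.inr_mul, Unitization.inr_mul]
    exact hmain
  · intro h a b ha hb hab
    rw [h a b, hab, map_zero, mul_zero]


end
end

section
/- Let θ : A → B be an isometric completely positive order zero map between C*-algebras with B = C*(θ(A)), and let θ̂ : C_0((0,1], A) → B be the induced surjective *-homomorphism from the cone of A with θ̂ ∘ ι = θ, where ι(a) = id_{(0,1]} ⊗ a. Then the induced *-homomorphism φ : A → B/θ̂(SA), where SA = C_0((0,1), A) is the suspension, is injective (hence a *-isomorphism onto B/θ̂(SA)). -/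
open scoped ENNReal Matrix
open Filter

noncomputable section

open scoped ZeroAtInfty

theorem zaiNormLe {α A : Type*} [TopologicalSpace α] [NonUnitalCStarAlgebra A]
    (g : C₀(α, A)) {C : ℝ} (hC : 0 ≤ C) (h : ∀ x, ‖g x‖ ≤ C) : ‖g‖ ≤ C := by
  rw [← ZeroAtInftyContinuousMap.norm_toBCF_eq_norm]
  exact (BoundedContinuousFunction.norm_le hC).mpr h

theorem zaiApplyNormLe {α A : Type*} [TopologicalSpace α] [NonUnitalCStarAlgebra A]
    (g : C₀(α, A)) (x : α) : ‖g x‖ ≤ ‖g‖ := by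
  rw [← ZeroAtInftyContinuousMap.norm_toBCF_eq_norm]
  exact BoundedContinuousFunction.norm_coe_le_norm g.toBCF x

/-- Let `θ : A → B` be an isometric completely positive order zero map with
`B = C*(θ(A))`, and let `θ̂ : C₀((0,1], A) → B` be the induced surjective ⋆-homomorphism from
the cone of `A` with `θ̂ ∘ ι = θ`, where `ι(a) = id_{(0,1]} ⊗ a`.  Then the induced
⋆-homomorphism `φ : A → B / θ̂(SA)` is injective, i.e. for `a ≠ 0` the element `θ(a)` does not
lie in the image under `θ̂` of the suspension `SA = C₀((0,1), A)` (the functions in the cone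
vanishing at `1`). -/
theorem stmt5 {A B : Type*} [NonUnitalCStarAlgebra A] [NonUnitalCStarAlgebra B]
    (θ : A →ₗ[ℂ] B)
    (hiso : ∀ a, ‖θ a‖ = ‖a‖)
    (hcp : CompletelyPositive θ)
    (hoz : ∀ a b : A, (∃ c, a = star c * c) → (∃ c, b = star c * c) → a * b = 0 →
      θ a * θ b = 0)
    (hgen : closure (↑(NonUnitalStarAlgebra.adjoin ℂ (Set.range θ)) : Set B) = Set.univ)
    (ι : A → C₀(↥(Set.Ioc (0:ℝ) 1), A))
    (hι : ∀ (a : A) (t : ↥(Set.Ioc (0:ℝ) 1)), ι a t = (t : ℝ) • a)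
    (θhat : C₀(↥(Set.Ioc (0:ℝ) 1), A) →⋆ₙₐ[ℂ] B)
    (hθhat : Function.Surjective θhat)
    (hfact : ∀ a : A, θhat (ι a) = θ a) :
    ∀ a : A, a ≠ 0 →
      θ a ∉ θhat '' {f : C₀(↥(Set.Ioc (0:ℝ) 1), A) |
        f ⟨1, Set.right_mem_Ioc.mpr one_pos⟩ = 0} := by
  intro a ha
  rintro ⟨f, hf1, hfθ⟩
  simp only [Set.mem_setOf_eq] at hf1
  set X := ↥(Set.Ioc (0:ℝ) 1)
  set t₁ : X := ⟨1, Set.right_mem_Ioc.mpr one_pos⟩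
  have hapos : (0:ℝ) < ‖a‖ := norm_pos_iff.mpr ha
  -- the recursively defined sequences in the cone
  set c : C₀(X, A) := ι a with hc
  let w : ℕ → C₀(X, A) := fun n => Nat.rec c (fun _ p => star p * p) n
  let v : ℕ → C₀(X, A) := fun n => Nat.rec f (fun k p => star (w k) * p) n
  have hw0 : w 0 = c := rfl
  have hwsucc : ∀ k, w (k + 1) = star (w k) * w k := fun _ => rfl
  have hv0 : v 0 = f := rfl
  have hvsucc : ∀ k, v (k + 1) = star (w k) * v k := fun _ => rfl
  -- θhat agrees on w and v
  have hwv : ∀ k, θhat (w k) = θhat (v k) := by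
    intro k
    induction k with
    | zero => rw [hw0, hv0, hc, hfact a, hfθ]
    | succ k ih =>
        rw [hwsucc, hvsucc, map_mul, map_mul, ih]
  -- the norm of θhat (w k)
  have hwnorm : ∀ k, ‖θhat (w k)‖ = ‖a‖ ^ (2 ^ k) := by
    intro k
    induction k with
    | zero =>
        rw [hw0, hc, hfact a, hiso a]; simp
    | succ k ih =>
        rw [hwsucc, map_mul, map_star, CStarRing.norm_star_mul_self, ih, ← pow_add]
        congr 1
        rw [pow_succ]
        omega
  have ht_pos : ∀ t : X, (0:ℝ) < (t:ℝ) := fun t => t.2.1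
  have ht_le : ∀ t : X, (t:ℝ) ≤ 1 := fun t => t.2.2
  -- pointwise bound on w
  have hcpt : ∀ t : X, ‖c t‖ = (t:ℝ) * ‖a‖ := by
    intro t
    rw [hc, hι a t, norm_smul, Real.norm_eq_abs, abs_of_pos (ht_pos t)]
  have hwpt : ∀ k (t : X), ‖w k t‖ ≤ (t:ℝ) ^ (2 ^ k) * ‖a‖ ^ (2 ^ k) := by
    intro k
    induction k with
    | zero =>
        intro t
        simpa [hw0, pow_one] using (hcpt t).le
    | succ k ih =>
        intro t
        have heval : (w (k + 1)) t = star (w k t) * (w k t) := by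
          rw [hwsucc]; rfl
        calc ‖w (k+1) t‖ = ‖star (w k t) * w k t‖ := by rw [heval]
          _ ≤ ‖star (w k t)‖ * ‖w k t‖ := norm_mul_le _ _
          _ = ‖w k t‖ * ‖w k t‖ := by rw [norm_star]
          _ ≤ ((t:ℝ) ^ (2 ^ k) * ‖a‖ ^ (2 ^ k)) * ((t:ℝ) ^ (2 ^ k) * ‖a‖ ^ (2 ^ k)) :=
              mul_le_mul (ih t) (ih t) (norm_nonneg _)
                (mul_nonneg (pow_nonneg (ht_pos t).le _) (pow_nonneg (norm_nonneg a) _))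
          _ = (t:ℝ) ^ (2 ^ (k+1)) * ‖a‖ ^ (2 ^ (k+1)) := by
              rw [pow_succ, pow_mul, pow_mul]; ring
  -- pointwise bound on v
  have hvpt : ∀ k (t : X), ‖v k t‖ ≤ (t:ℝ) ^ (2 ^ k - 1) * ‖a‖ ^ (2 ^ k - 1) * ‖f t‖ := by
    intro k
    induction k with
    | zero =>
        intro t
        simp [hv0]
    | succ k ih =>
        intro t
        have heval : (v (k + 1)) t = star (w k t) * (v k t) := by
          rw [hvsucc]; rfl
        have hexp : 2 ^ (k + 1) - 1 = 2 ^ k + (2 ^ k - 1) := by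
          have h1 : 1 ≤ 2 ^ k := Nat.one_le_two_pow
          have h2 : 2 ^ (k + 1) = 2 ^ k + 2 ^ k := by rw [pow_succ]; ring
          omega
        calc ‖v (k+1) t‖ = ‖star (w k t) * v k t‖ := by rw [heval]
          _ ≤ ‖star (w k t)‖ * ‖v k t‖ := norm_mul_le _ _
          _ = ‖w k t‖ * ‖v k t‖ := by rw [norm_star]
          _ ≤ ((t:ℝ) ^ (2 ^ k) * ‖a‖ ^ (2 ^ k)) *
                ((t:ℝ) ^ (2 ^ k - 1) * ‖a‖ ^ (2 ^ k - 1) * ‖f t‖) :=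
              mul_le_mul (hwpt k t) (ih t) (norm_nonneg _)
                (mul_nonneg (pow_nonneg (ht_pos t).le _) (pow_nonneg (norm_nonneg a) _))
          _ = (t:ℝ) ^ (2 ^ (k+1) - 1) * ‖a‖ ^ (2 ^ (k+1) - 1) * ‖f t‖ := by
              rw [hexp, pow_add, pow_add]; ring
  -- choose δ by continuity of f at 1
  have hcont : ContinuousAt f t₁ := (map_continuous f).continuousAt
  rw [Metric.continuousAt_iff] at hcont
  obtain ⟨δ, hδpos, hδ⟩ := hcont (‖a‖ / 2) (by linarith)
  have hδ' : ∀ t : X, 1 - δ < (t:ℝ) → ‖f t‖ ≤ ‖a‖ / 2 := by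
    intro t ht
    have hd : dist t t₁ < δ := by
      rw [Subtype.dist_eq]
      have : dist (t:ℝ) ((t₁ : X) : ℝ) = |(t:ℝ) - 1| := by rw [Real.dist_eq]
      rw [this, abs_sub_lt_iff]
      constructor <;> [linarith [ht_le t]; linarith]
    have := hδ hd
    rw [hf1, dist_zero_right] at this
    linarith
  -- choose the exponent
  set r : ℝ := max (1 - δ) 0 with hr
  have hr0 : 0 ≤ r := le_max_right _ _
  have hr1 : r < 1 := by
    rw [hr, max_lt_iff]; constructor <;> linarith
  obtain ⟨n₀, hn₀⟩ := exists_pow_lt_of_lt_one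
    (show (0:ℝ) < (‖a‖ / 2) / (‖f‖ + 1) by
      have : (0:ℝ) < ‖f‖ + 1 := by positivity
      positivity) hr1
  have hfb : r ^ n₀ * ‖f‖ ≤ ‖a‖ / 2 := by
    have h1 : (0:ℝ) < ‖f‖ + 1 := by positivity
    have h2 : r ^ n₀ * (‖f‖ + 1) < ‖a‖ / 2 := by
      rw [← lt_div_iff₀ h1]
      exact hn₀
    nlinarith [pow_nonneg hr0 n₀]
  set e : ℕ := 2 ^ n₀ - 1 with he
  have he1 : e + 1 = 2 ^ n₀ := Nat.sub_add_cancel Nat.one_le_two_pow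
  have hen₀ : n₀ ≤ e := by
    have := @Nat.lt_two_pow_self n₀
    omega
  -- the key bound
  have hbound : ∀ t : X, ‖v n₀ t‖ ≤ ‖a‖ ^ e * (‖a‖ / 2) := by
    intro t
    refine le_trans (hvpt n₀ t) ?_
    rw [← he]
    rcases le_or_gt (t:ℝ) (1 - δ) with htδ | htδ
    · -- small t
      have htr : (t:ℝ) ≤ r := le_trans htδ (le_max_left _ _)
      have h1 : (t:ℝ) ^ e ≤ r ^ e := pow_le_pow_left₀ (ht_pos t).le htr e
      have h2 : r ^ e ≤ r ^ n₀ := pow_le_pow_of_le_one hr0 hr1.le hen₀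
      have h3 : ‖f t‖ ≤ ‖f‖ := zaiApplyNormLe f t
      calc (t:ℝ) ^ e * ‖a‖ ^ e * ‖f t‖ ≤ r ^ n₀ * ‖a‖ ^ e * ‖f‖ := by
            have ht0 : (0:ℝ) ≤ (t:ℝ) ^ e := pow_nonneg (ht_pos t).le e
            have ha0 : (0:ℝ) ≤ ‖a‖ ^ e := by positivity
            have := mul_le_mul (mul_le_mul (h1.trans h2) (le_refl (‖a‖ ^ e)) ha0
              (pow_nonneg hr0 n₀)) h3 (norm_nonneg _)
              (mul_nonneg (pow_nonneg hr0 n₀) ha0)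
            exact this
        _ = ‖a‖ ^ e * (r ^ n₀ * ‖f‖) := by ring
        _ ≤ ‖a‖ ^ e * (‖a‖ / 2) := by
            exact mul_le_mul_of_nonneg_left hfb (by positivity)
    · -- t near 1
      have h1 : (t:ℝ) ^ e ≤ 1 := pow_le_one₀ (ht_pos t).le (ht_le t)
      have h2 : ‖f t‖ ≤ ‖a‖ / 2 := hδ' t htδ
      calc (t:ℝ) ^ e * ‖a‖ ^ e * ‖f t‖ ≤ 1 * ‖a‖ ^ e * (‖a‖ / 2) := by
            have ha0 : (0:ℝ) ≤ ‖a‖ ^ e := pow_nonneg (norm_nonneg a) e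
            have := mul_le_mul (mul_le_mul h1 (le_refl (‖a‖ ^ e)) ha0 zero_le_one)
              h2 (norm_nonneg _) (by simp [ha0])
            exact this
        _ = ‖a‖ ^ e * (‖a‖ / 2) := by ring
  -- derive the contradiction
  have hfinal : ‖a‖ ^ (2 ^ n₀) ≤ ‖a‖ ^ e * (‖a‖ / 2) := by
    calc ‖a‖ ^ (2 ^ n₀) = ‖θhat (w n₀)‖ := (hwnorm n₀).symm
      _ = ‖θhat (v n₀)‖ := by rw [hwv n₀]
      _ ≤ ‖v n₀‖ := NonUnitalStarAlgHom.norm_apply_le θhat (v n₀)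
      _ ≤ ‖a‖ ^ e * (‖a‖ / 2) := zaiNormLe _ (by positivity) hbound
  rw [← he1, pow_succ] at hfinal
  have hae : (0:ℝ) < ‖a‖ ^ e := by positivity
  nlinarith

end
end
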